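/- Let r = 2m+2 be even and ℓ ∈ ℝ^r a generic length vector with nonnegative weakly increasing components. Then μ(ℓ) = m+1 if and only if ℓ is equivalent to (0,1,...,1), i.e., a subset J ⊆ {1,...,r} is ℓ-long if and only if #(J ∩ {2,...,r}) ≥ m+1. -/
import Mathlib

set_option maxHeartbeats 4000000


open Finset

/-- `J` is `ℓ`-long if the sum of `ℓ` over `J` exceeds the sum over its complement. -/
def IsLong {r : ℕ} (ℓ : Fin r → ℝ) (J : Finset (Fin r)) : Prop :=
  ∑ j ∈ Jᶜ, ℓ j < ∑ j ∈ J, ℓ j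

/-- `ℓ` is generic if no subset sum equals the complementary sum. -/
def IsGeneric {r : ℕ} (ℓ : Fin r → ℝ) : Prop :=
  ∀ J : Finset (Fin r), ∑ j ∈ J, ℓ j ≠ ∑ j ∈ Jᶜ, ℓ j

open scoped Classical in
/-- `σ_ℓ(J)`: the number of `j ∈ J` such that `J \ {j}` is `ℓ`-short. -/
noncomputable def sigmaL {r : ℕ} (ℓ : Fin r → ℝ) (J : Finset (Fin r)) : ℕ :=
  (J.filter (fun j => ¬ IsLong ℓ (J.erase j))).card

/-- `μ(ℓ) = min { σ_ℓ(J) : J ℓ-long, σ_ℓ(J) > 0 }`. -/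
noncomputable def muL {r : ℕ} (ℓ : Fin r → ℝ) : ℕ :=
  sInf {n : ℕ | 0 < n ∧ ∃ J : Finset (Fin r), IsLong ℓ J ∧ sigmaL ℓ J = n}

lemma isLong_iff {r : ℕ} (ℓ : Fin r → ℝ) (J : Finset (Fin r)) :
    IsLong ℓ J ↔ ∑ j, ℓ j < 2 * ∑ j ∈ J, ℓ j := by
  have h := Finset.sum_add_sum_compl J ℓ
  unfold IsLong
  constructor <;> intro h' <;> linarith

lemma isLong_mono {r : ℕ} (ℓ : Fin r → ℝ) {J K : Finset (Fin r)}
    (h : ∑ j ∈ J, ℓ j ≤ ∑ j ∈ K, ℓ j) (hJ : IsLong ℓ J) : IsLong ℓ K := by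
  rw [isLong_iff] at hJ ⊢; linarith

lemma not_isLong_iff {r : ℕ} (ℓ : Fin r → ℝ) (hg : IsGeneric ℓ) (J : Finset (Fin r)) :
    ¬ IsLong ℓ J ↔ IsLong ℓ Jᶜ := by
  unfold IsLong
  rw [compl_compl]
  have := hg J
  constructor
  · intro h
    exact lt_of_le_of_ne (not_lt.1 h) this
  · intro h h'
    linarith

lemma sum_pivot_le {r : ℕ} (ℓ : Fin r → ℝ) (hpos : ∀ j, 0 ≤ ℓ j) {X Y : Finset (Fin r)} (c : ℝ)
    (hX : ∀ a ∈ X \ Y, ℓ a ≤ c) (hY : ∀ b ∈ Y \ X, c ≤ ℓ b)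
    (hcard : X.card ≤ Y.card) : ∑ j ∈ X, ℓ j ≤ ∑ j ∈ Y, ℓ j := by
  have hc1 : (X \ Y).card ≤ (Y \ X).card := by
    have h1 := Finset.card_sdiff_add_card_inter X Y
    have h2 := Finset.card_sdiff_add_card_inter Y X
    rw [Finset.inter_comm] at h2
    omega
  obtain ⟨T, hTsub, hTcard⟩ := Finset.exists_subset_card_eq hc1
  have h3 : ∑ j ∈ X \ Y, ℓ j ≤ (X \ Y).card • c := Finset.sum_le_card_nsmul _ _ _ hX
  have h4 : T.card • c ≤ ∑ j ∈ T, ℓ j :=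
    Finset.card_nsmul_le_sum _ _ _ (fun b hb => hY b (hTsub hb))
  have h5 : ∑ j ∈ T, ℓ j ≤ ∑ j ∈ Y \ X, ℓ j :=
    Finset.sum_le_sum_of_subset_of_nonneg hTsub (fun j _ _ => hpos j)
  have h6 := Finset.sum_inter_add_sum_sdiff X Y ℓ
  have h7 := Finset.sum_inter_add_sum_sdiff Y X ℓ
  rw [Finset.inter_comm] at h7
  rw [hTcard] at h4
  linarith

lemma card_filter_val {n : ℕ} (p : ℕ → Prop) [DecidablePred p] :
    ((univ : Finset (Fin n)).filter (fun j : Fin n => p (j : ℕ))).card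
      = ((Finset.range n).filter p).card := by
  have h : Finset.image Fin.val ((univ : Finset (Fin n)).filter (fun j : Fin n => p (j : ℕ)))
      = (Finset.range n).filter p := by
    ext b
    simp only [Finset.mem_image, Finset.mem_filter, Finset.mem_univ, true_and,
      Finset.mem_range]
    constructor
    · rintro ⟨j, hj, rfl⟩
      exact ⟨j.isLt, hj⟩
    · rintro ⟨hb, hp⟩
      exact ⟨⟨b, hb⟩, hp, rfl⟩
  calc ((univ : Finset (Fin n)).filter (fun j : Fin n => p (j : ℕ))).card
      = (Finset.image Fin.val ((univ : Finset (Fin n)).filter (fun j : Fin n => p (j : ℕ)))).card :=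
        (Finset.card_image_of_injective _ Fin.val_injective).symm
    _ = ((Finset.range n).filter p).card := by rw [h]

theorem mu_eq_succ_iff_equilateral_even {r m : ℕ} (hr : r = 2 * m + 2)
    (ℓ : Fin r → ℝ) (hg : IsGeneric ℓ) (hpos : ∀ j, 0 ≤ ℓ j)
    (hmono : Monotone ℓ) :
    muL ℓ = m + 1 ↔
      ∀ J : Finset (Fin r), IsLong ℓ J ↔
        m + 1 ≤ (J.filter (fun j : Fin r => 1 ≤ (j : ℕ))).card := by
  subst hr
  classical
  set A : Finset (Fin (2*m+2)) :=
    univ.filter (fun j => 1 ≤ (j:ℕ) ∧ (j:ℕ) ≤ m+1) with hA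
  set Top : Finset (Fin (2*m+2)) :=
    univ.filter (fun j => m + 2 ≤ (j:ℕ)) with hTop
  have hAcard : A.card = m + 1 := by
    rw [hA, card_filter_val (fun j => 1 ≤ j ∧ j ≤ m+1)]
    have h : ((Finset.range (2*m+2)).filter fun j => 1 ≤ j ∧ j ≤ m+1)
        = Finset.Ico 1 (m+2) := by
      ext j; simp [Finset.mem_Ico]; omega
    rw [h, Nat.card_Ico]
    omega
  have hTopcard : Top.card = m := by
    rw [hTop, card_filter_val (fun j => m + 2 ≤ j)]
    have h : ((Finset.range (2*m+2)).filter fun j => m + 2 ≤ j)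
        = Finset.Ico (m+2) (2*m+2) := by
      ext j; simp [Finset.mem_Ico]; omega
    rw [h, Nat.card_Ico]
    omega
  set piv : Fin (2*m+2) := ⟨min (m+2) (2*m+1), by omega⟩ with hpiv
  have hpivval : (piv : ℕ) = min (m+2) (2*m+1) := rfl
  set z : Fin (2*m+2) := ⟨0, by omega⟩ with hz
  have hzval : (z : ℕ) = 0 := rfl
  have hAmem : ∀ j : Fin (2*m+2), j ∈ A ↔ (1 ≤ (j:ℕ) ∧ (j:ℕ) ≤ m+1) := by
    intro j; simp [hA]
  have hTopmem : ∀ j : Fin (2*m+2), j ∈ Top ↔ m + 2 ≤ (j:ℕ) := by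
    intro j; simp [hTop]
  have hc_le : ∀ a : Fin (2*m+2), (a:ℕ) ≤ m+1 → ℓ a ≤ ℓ piv := by
    intro a ha
    apply hmono
    rw [Fin.le_def]
    omega
  have hc_ge : ∀ b : Fin (2*m+2), m+2 ≤ (b:ℕ) → ℓ piv ≤ ℓ b := by
    intro b hb
    apply hmono
    rw [Fin.le_def]
    omega
  -- Part 1: A long implies the RHS characterization
  have part1 : IsLong ℓ A → ∀ J : Finset (Fin (2*m+2)), IsLong ℓ J ↔
      m + 1 ≤ (J.filter (fun j : Fin (2*m+2) => 1 ≤ (j : ℕ))).card := by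
    intro hA0 J
    constructor
    · intro hJ
      by_contra hle
      push_neg at hle
      set S := J.filter (fun j : Fin (2*m+2) => 1 ≤ (j:ℕ)) with hS
      have h0S : z ∉ S := by simp [hS, hzval]
      have h1 : J ⊆ insert z S := by
        intro j hj
        rw [Finset.mem_insert]
        by_cases h : 1 ≤ (j:ℕ)
        · exact Or.inr (Finset.mem_filter.2 ⟨hj, h⟩)
        · exact Or.inl (Fin.ext (by omega))
      have h2 : ∑ j ∈ J, ℓ j ≤ ℓ z + ∑ j ∈ S, ℓ j := by
        calc ∑ j ∈ J, ℓ j ≤ ∑ j ∈ insert z S, ℓ j :=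
              Finset.sum_le_sum_of_subset_of_nonneg h1 (fun j _ _ => hpos j)
          _ = ℓ z + ∑ j ∈ S, ℓ j := Finset.sum_insert h0S
      have h3 : ∑ j ∈ S, ℓ j ≤ ∑ j ∈ Top, ℓ j := by
        apply sum_pivot_le ℓ hpos (ℓ piv)
        · intro a ha
          rw [Finset.mem_sdiff, hS, hTop, Finset.mem_filter, Finset.mem_filter] at ha
          apply hc_le
          simp only [Finset.mem_univ, true_and, not_and, not_le] at ha
          omega
        · intro b hb
          rw [Finset.mem_sdiff, hTop, Finset.mem_filter] at hb
          exact hc_ge b hb.1.2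
        · rw [hTopcard]; omega
      have h4 : ℓ z + ∑ j ∈ Top, ℓ j = ∑ j ∈ Aᶜ, ℓ j := by
        have hAc : Aᶜ = insert z Top := by
          ext j
          have hjlt := j.isLt
          rw [Finset.mem_compl, Finset.mem_insert, hAmem j, hTopmem j, Fin.ext_iff]
          omega
        rw [hAc, Finset.sum_insert (by rw [hTopmem]; omega)]
      have h5 : ¬ IsLong ℓ Aᶜ := by
        rw [not_isLong_iff ℓ hg, compl_compl]
        exact hA0
      exact h5 (isLong_mono ℓ (by linarith) hJ)
    · intro hge
      obtain ⟨S, hSsub, hScard⟩ := Finset.exists_subset_card_eq hge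
      have hAS : ∑ j ∈ A, ℓ j ≤ ∑ j ∈ S, ℓ j := by
        apply sum_pivot_le ℓ hpos (ℓ piv)
        · intro a ha
          rw [Finset.mem_sdiff, hA, Finset.mem_filter] at ha
          exact hc_le a ha.1.2.2
        · intro b hb
          rw [Finset.mem_sdiff] at hb
          have hb1 := hSsub hb.1
          rw [Finset.mem_filter] at hb1
          have hb2 := hb.2
          rw [hA, Finset.mem_filter] at hb2
          simp only [Finset.mem_univ, true_and, not_and, not_le] at hb2
          apply hc_ge
          omega
        · rw [hAcard, hScard]
      have hSJ : ∑ j ∈ S, ℓ j ≤ ∑ j ∈ J, ℓ j :=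
        Finset.sum_le_sum_of_subset_of_nonneg
          (hSsub.trans (Finset.filter_subset _ _)) (fun j _ _ => hpos j)
      exact isLong_mono ℓ (le_trans hAS hSJ) hA0
  have hfilterA : A.filter (fun j : Fin (2*m+2) => 1 ≤ (j:ℕ)) = A := by
    apply Finset.filter_true_of_mem
    intro j hj
    rw [hA, Finset.mem_filter] at hj
    exact hj.2.1
  -- Part 2: RHS implies A is long
  have part2 : (∀ J : Finset (Fin (2*m+2)), IsLong ℓ J ↔
      m + 1 ≤ (J.filter (fun j : Fin (2*m+2) => 1 ≤ (j : ℕ))).card) → IsLong ℓ A := by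
    intro h
    rw [h A, hfilterA, hAcard]
  constructor
  · -- forward direction
    intro hμ
    have hlow : ∀ K : Finset (Fin (2*m+2)), IsLong ℓ K → sigmaL ℓ K ≠ 0 →
        m + 1 ≤ sigmaL ℓ K := by
      intro K hK hne
      have hmem : sigmaL ℓ K ∈
          {n : ℕ | 0 < n ∧ ∃ J : Finset (Fin (2*m+2)), IsLong ℓ J ∧ sigmaL ℓ J = n} :=
        ⟨Nat.pos_of_ne_zero hne, K, hK, rfl⟩
      exact le_trans (le_of_eq hμ.symm) (Nat.sInf_le hmem)
    have hAlong : IsLong ℓ A := by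
      by_contra hA0
      rw [not_isLong_iff ℓ hg] at hA0
      set Jt : ℕ → Finset (Fin (2*m+2)) := fun t =>
        univ.filter (fun j => (j:ℕ) ≤ t ∨ (m+2 ≤ (j:ℕ) ∧ (j:ℕ) < 2*m+2 - t)) with hJt
      have hJtmem : ∀ (t : ℕ) (j : Fin (2*m+2)),
          j ∈ Jt t ↔ ((j:ℕ) ≤ t ∨ (m+2 ≤ (j:ℕ) ∧ (j:ℕ) < 2*m+2 - t)) := by
        intro t j; simp [hJt]
      have hJ0 : Jt 0 = Aᶜ := by
        ext j
        have hjlt := j.isLt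
        rw [hJtmem, Finset.mem_compl, hAmem j]
        omega
      have hJtcard : ∀ t, t ≤ m → (Jt t).card = m + 1 := by
        intro t ht
        simp only [hJt]
        rw [card_filter_val (fun j => j ≤ t ∨ (m+2 ≤ j ∧ j < 2*m+2 - t))]
        have h : ((Finset.range (2*m+2)).filter fun j => j ≤ t ∨ (m+2 ≤ j ∧ j < 2*m+2 - t))
            = Finset.range (t+1) ∪ Finset.Ico (m+2) (2*m+2-t) := by
          ext j; simp [Finset.mem_Ico]; omega
        rw [h, Finset.card_union_of_disjoint, Finset.card_range, Nat.card_Ico]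
        · omega
        · rw [Finset.disjoint_left]
          intro x hx hx'
          rw [Finset.mem_range] at hx
          rw [Finset.mem_Ico] at hx'
          omega
      have key : ∀ t, t ≤ m → IsLong ℓ (Jt t) := by
        intro t
        induction t with
        | zero => intro _; rw [hJ0]; exact hA0
        | succ t ih =>
          intro ht
          have hJtl := ih (by omega)
          have htlt : t + 1 < 2*m+2 := by omega
          set a : Fin (2*m+2) := ⟨t+1, htlt⟩ with ha
          have hav : (a : ℕ) = t + 1 := rfl
          have haJ : a ∉ Jt t := by
            intro hmem
            rw [hJtmem] at hmem
            omega
          set Q := insert a (Jt t) with hQ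
          have hQsum : ∑ j ∈ Q, ℓ j = ℓ a + ∑ j ∈ Jt t, ℓ j := Finset.sum_insert haJ
          have hQlong : IsLong ℓ Q :=
            isLong_mono ℓ (by rw [hQsum]; have := hpos a; linarith) hJtl
          have hQcard : Q.card = m + 2 := by
            rw [hQ, Finset.card_insert_of_notMem haJ, hJtcard t (by omega)]
          set b : Fin (2*m+2) := ⟨t, by omega⟩ with hb
          have hbv : (b : ℕ) = t := rfl
          have hbJ : b ∈ Jt t := by
            rw [hJtmem]
            omega
          have hbQ : b ∈ Q := Finset.mem_insert_of_mem hbJ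
          have hne : b ≠ a := by
            intro h
            have := congrArg Fin.val h
            omega
          have hlong1 : IsLong ℓ (Q.erase a) := by
            rw [hQ, Finset.erase_insert haJ]; exact hJtl
          have hlong2 : IsLong ℓ (Q.erase b) := by
            apply isLong_mono ℓ _ hJtl
            have h1 := Finset.sum_erase_add Q ℓ hbQ
            have h2 : ℓ b ≤ ℓ a := by
              apply hmono
              rw [Fin.le_def]
              omega
            linarith
          have hσle : sigmaL ℓ Q ≤ m := by
            have hsub : Q.filter (fun j => ¬ IsLong ℓ (Q.erase j)) ⊆ (Q.erase b).erase a := by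
              intro j hj
              rw [Finset.mem_filter] at hj
              rw [Finset.mem_erase, Finset.mem_erase]
              refine ⟨?_, ?_, hj.1⟩
              · intro hja; rw [hja] at hj; exact hj.2 hlong1
              · intro hjb; rw [hjb] at hj; exact hj.2 hlong2
            have hcle := Finset.card_le_card hsub
            have haQb : a ∈ Q.erase b := Finset.mem_erase.2 ⟨hne.symm, Finset.mem_insert_self a _⟩
            rw [Finset.card_erase_of_mem haQb, Finset.card_erase_of_mem hbQ, hQcard] at hcle
            calc sigmaL ℓ Q = (Q.filter (fun j => ¬ IsLong ℓ (Q.erase j))).card := rfl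
              _ ≤ m := by omega
          have hσ0 : sigmaL ℓ Q = 0 := by
            by_contra h0
            have := hlow Q hQlong h0
            omega
          have hall : ∀ j ∈ Q, IsLong ℓ (Q.erase j) := by
            intro j hj
            by_contra hcon
            have hjf : j ∈ Q.filter (fun j => ¬ IsLong ℓ (Q.erase j)) :=
              Finset.mem_filter.2 ⟨hj, hcon⟩
            have hcard0 : (Q.filter (fun j => ¬ IsLong ℓ (Q.erase j))).card = 0 := hσ0
            rw [Finset.card_eq_zero] at hcard0
            rw [hcard0] at hjf
            exact absurd hjf (Finset.notMem_empty j)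
          obtain ⟨w, hwv⟩ : ∃ w : Fin (2*m+2), (w : ℕ) = 2*m+1-t :=
            ⟨⟨2*m+1-t, by omega⟩, rfl⟩
          have hmaxmem : w ∈ Q := by
            refine Finset.mem_insert_of_mem ?_
            rw [hJtmem]
            omega
          have hfin := hall _ hmaxmem
          have heq : Q.erase w = Jt (t+1) := by
            ext j
            have hjlt := j.isLt
            rw [Finset.mem_erase, hQ, Finset.mem_insert, hJtmem, hJtmem, ne_eq, Fin.ext_iff,
              Fin.ext_iff]
            omega
          rwa [heq] at hfin
      have hJm := key m le_rfl
      unfold IsLong at hJm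
      have hpair : ∑ j ∈ Jt m, ℓ j ≤ ∑ j ∈ (Jt m)ᶜ, ℓ j := by
        have hmemval : ∀ j ∈ Jt m, (j:ℕ) ≤ m := by
          intro j hj
          rw [hJtmem] at hj
          omega
        obtain ⟨f, hfv⟩ : ∃ f : Fin (2*m+2) → Fin (2*m+2),
            ∀ j : Fin (2*m+2), (j:ℕ) ≤ m → (f j : ℕ) = (j:ℕ) + (m+1) :=
          ⟨fun j => ⟨((j:ℕ) + (m+1)) % (2*m+2), Nat.mod_lt _ (by omega)⟩,
            fun j hj => Nat.mod_eq_of_lt (by omega)⟩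
        have hfval : ∀ j ∈ Jt m, (f j : ℕ) = (j:ℕ) + (m+1) := fun j hj => hfv j (hmemval j hj)
        have hinj : Set.InjOn f (Jt m) := by
          intro x hx y hy hxy
          have h1 := hfval x hx
          have h2 := hfval y hy
          rw [hxy] at h1
          exact Fin.ext (by omega)
        have hsubc : (Jt m).image f ⊆ (Jt m)ᶜ := by
          intro j hj
          obtain ⟨x, hx, rfl⟩ := Finset.mem_image.1 hj
          rw [Finset.mem_compl, hJtmem]
          have h1 := hfval x hx
          have h2 := hmemval x hx
          omega
        calc ∑ j ∈ Jt m, ℓ j ≤ ∑ j ∈ Jt m, ℓ (f j) := by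
              apply Finset.sum_le_sum
              intro j hj
              apply hmono
              rw [Fin.le_def, hfval j hj]
              omega
          _ = ∑ j ∈ (Jt m).image f, ℓ j := (Finset.sum_image (fun x hx y hy => hinj hx hy)).symm
          _ ≤ ∑ j ∈ (Jt m)ᶜ, ℓ j :=
              Finset.sum_le_sum_of_subset_of_nonneg hsubc (fun j _ _ => hpos j)
      linarith
    exact part1 hAlong
  · -- backward direction
    intro hRHS
    have hAlong : IsLong ℓ A := part2 hRHS
    have hfcA : (A.filter (fun j : Fin (2*m+2) => 1 ≤ (j:ℕ))).card = m+1 := by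
      rw [hfilterA, hAcard]
    have hb : ∀ J : Finset (Fin (2*m+2)), IsLong ℓ J →
        (J.filter (fun j : Fin (2*m+2) => 1 ≤ (j:ℕ))).card = m+1 → sigmaL ℓ J = m+1 := by
      intro J hJ hfc
      have hfe : J.filter (fun j => ¬ IsLong ℓ (J.erase j))
          = J.filter (fun j : Fin (2*m+2) => 1 ≤ (j:ℕ)) := by
        apply Finset.filter_congr
        intro j hj
        have herase := Finset.filter_erase (p := fun x : Fin (2*m+2) => 1 ≤ (x:ℕ)) j J
        by_cases hp : 1 ≤ (j:ℕ)
        · simp only [hp, iff_true]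
          rw [hRHS, herase, Finset.card_erase_of_mem (Finset.mem_filter.2 ⟨hj, hp⟩), hfc]
          omega
        · simp only [hp, iff_false, not_not]
          apply (hRHS _).2
          rw [herase, Finset.erase_eq_of_notMem (by simp [hp]), hfc]
      calc sigmaL ℓ J = (J.filter (fun j => ¬ IsLong ℓ (J.erase j))).card := rfl
        _ = m + 1 := by rw [hfe, hfc]
    have ha0 : ∀ J : Finset (Fin (2*m+2)), IsLong ℓ J →
        (J.filter (fun j : Fin (2*m+2) => 1 ≤ (j:ℕ))).card ≠ m+1 → sigmaL ℓ J = 0 := by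
      intro J hJ hne
      have hge : m+2 ≤ (J.filter (fun j : Fin (2*m+2) => 1 ≤ (j:ℕ))).card := by
        have := (hRHS J).1 hJ
        omega
      have hfe : J.filter (fun j => ¬ IsLong ℓ (J.erase j)) = ∅ := by
        rw [Finset.filter_eq_empty_iff]
        intro j hj
        rw [not_not]
        apply (hRHS _).2
        have herase := Finset.filter_erase (p := fun x : Fin (2*m+2) => 1 ≤ (x:ℕ)) j J
        rw [herase]
        have hple := Finset.pred_card_le_card_erase
          (s := J.filter (fun x : Fin (2*m+2) => 1 ≤ (x:ℕ))) (a := j)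
        omega
      calc sigmaL ℓ J = (J.filter (fun j => ¬ IsLong ℓ (J.erase j))).card := rfl
        _ = 0 := by rw [hfe]; rfl
    have hmem : m + 1 ∈
        {k : ℕ | 0 < k ∧ ∃ J : Finset (Fin (2*m+2)), IsLong ℓ J ∧ sigmaL ℓ J = k} :=
      ⟨by omega, A, hAlong, hb A hAlong hfcA⟩
    have hlb : ∀ k ∈
        {k : ℕ | 0 < k ∧ ∃ J : Finset (Fin (2*m+2)), IsLong ℓ J ∧ sigmaL ℓ J = k},
        m + 1 ≤ k := by
      rintro k ⟨hk, J, hJ, rfl⟩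
      by_cases hfc : (J.filter (fun j : Fin (2*m+2) => 1 ≤ (j:ℕ))).card = m+1
      · rw [hb J hJ hfc]
      · rw [ha0 J hJ hfc] at hk
        omega
    exact le_antisymm (Nat.sInf_le hmem) (le_csInf ⟨m+1, hmem⟩ hlb)
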